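/- For every integer n ≥ 2 and every x ∈ [0,1], letting t⁺ denote max(t,0), the function g_n(x) = (1−x)·n·( ((2x−1)⁺)^(n−1) − ((4x−3)⁺)^(n−1) ) satisfies g_n(x) ≤ 1/4. -/

import Mathlib

open Set

lemma bern2' (m : ℕ) (h : ℝ) (hh : 0 ≤ h) :
    1 + (m:ℝ)*h + (m:ℝ)*((m:ℝ)-1)/2*h^2 ≤ (1+h)^m := by
  induction m with
  | zero => simp
  | succ k ih =>
    have h1 : (0:ℝ) ≤ (k:ℝ) := Nat.cast_nonneg k
    have hkk : (0:ℝ) ≤ (k:ℝ)*((k:ℝ)-1) := by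
      rcases Nat.eq_zero_or_pos k with rfl | hk
      · simp
      · have : (1:ℝ) ≤ (k:ℝ) := by exact_mod_cast hk
        nlinarith
    have hmul := mul_le_mul_of_nonneg_right ih (by linarith : (0:ℝ) ≤ 1+h)
    have hcube : (0:ℝ) ≤ (k:ℝ)*((k:ℝ)-1) * h^3 :=
      mul_nonneg hkk (by positivity)
    have : (1+h)^(k+1) = (1+h)^k * (1+h) := by ring
    rw [this]
    push_cast
    nlinarith [hmul, hcube]

lemma quadP (m u : ℝ) (hm : 2 ≤ m) (h0 : 0 ≤ u) (h1 : u ≤ 1) :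
    4*m*(1-u)*u^2 ≤ 2*u^2 + 2*(m-1)*(1-u)*u + (m-1)*(m-2)*(1-u)^2 := by
  nlinarith [sq_nonneg (2*u-1), sq_nonneg (m*(1-u)-1), sq_nonneg (m*(1-u)-2*u),
    mul_nonneg (sub_nonneg.2 hm) (sq_nonneg (2*u-1)),
    mul_nonneg (mul_nonneg (sub_nonneg.2 hm) (sub_nonneg.2 h1)) (sq_nonneg (2*u-1)),
    mul_nonneg (mul_nonneg (sub_nonneg.2 hm) h0) (sq_nonneg (2*u-1)),
    mul_nonneg h0 (sq_nonneg (2*u-1)),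
    mul_nonneg (sub_nonneg.2 h1) (sq_nonneg (m*(1-u)-1)),
    mul_nonneg h0 (sq_nonneg (m*(1-u)-1)),
    mul_nonneg (sub_nonneg.2 hm) (sq_nonneg (m*(1-u)-1)),
    mul_nonneg (mul_nonneg (sub_nonneg.2 hm) (sub_nonneg.2 h1)) (sq_nonneg (m*(1-u)-1)),
    mul_nonneg h0 (sub_nonneg.2 h1), sq_nonneg ((m+5)*(1-u)-2)]

lemma key' (n : ℕ) (hn : 2 ≤ n) (u : ℝ) (h0 : 0 ≤ u) (h1 : u ≤ 1) :
    (n:ℝ) * (1-u) * u^(n-1) ≤ 1/2 := by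
  rcases eq_or_lt_of_le h0 with rfl | hu
  · rw [zero_pow (by omega : n - 1 ≠ 0)]
    norm_num
  · set h : ℝ := 1/u - 1 with hdef
    have hh : 0 ≤ h := by
      have := one_le_one_div hu h1
      rw [hdef]; linarith
    have huh : u * (1 + h) = 1 := by
      rw [hdef, mul_add, mul_sub, mul_one, mul_one_div_cancel hu.ne']; ring
    have hb := bern2' (n-1) h hh
    have hcast : ((n-1:ℕ):ℝ) = (n:ℝ) - 1 := by
      push_cast [Nat.cast_sub (by omega : 1 ≤ n)]; ring
    rw [hcast] at hb
    have hpow : u^(n-1) * (1+h)^(n-1) = 1 := by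
      rw [← mul_pow, huh, one_pow]
    have hn2 : (2:ℝ) ≤ (n:ℝ) := by exact_mod_cast hn
    have hu2 : u * h = 1 - u := by
      rw [hdef]; field_simp
    have hQ := quadP (n:ℝ) u hn2 h0 h1
    have hkey : 2*(n:ℝ)*(1-u) ≤ 1 + ((n:ℝ)-1)*h + ((n:ℝ)-1)*((n:ℝ)-1-1)/2*h^2 := by
      rw [← mul_le_mul_iff_of_pos_right (show (0:ℝ) < u^2 by positivity)]
      have expand : (1 + ((n:ℝ)-1)*h + ((n:ℝ)-1)*((n:ℝ)-1-1)/2*h^2) * u^2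
          = u^2 + ((n:ℝ)-1)*(u*h)*u + ((n:ℝ)-1)*((n:ℝ)-2)/2*(u*h)^2 := by ring
      rw [expand, hu2]
      linarith [hQ]
    have hup : (0:ℝ) < u^(n-1) := pow_pos hu _
    calc (n:ℝ) * (1-u) * u^(n-1)
        ≤ (1 + ((n:ℝ)-1)*h + ((n:ℝ)-1)*((n:ℝ)-1-1)/2*h^2)/2 * u^(n-1) := by
          apply mul_le_mul_of_nonneg_right _ (le_of_lt hup)
          linarith
      _ ≤ (1+h)^(n-1)/2 * u^(n-1) := by
          apply mul_le_mul_of_nonneg_right _ (le_of_lt hup)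
          linarith
      _ = 1/2 := by rw [div_mul_eq_mul_div, mul_comm, hpow]

theorem stmt_14 (n : ℕ) (hn : 2 ≤ n) (x : ℝ) (hx : x ∈ Icc (0:ℝ) 1) :
    (1 - x) * (n:ℝ) * ((max (2*x - 1) 0) ^ (n-1) - (max (4*x - 3) 0) ^ (n-1)) ≤ 1/4 := by
  obtain ⟨hx0, hx1⟩ := hx
  have hb : (0:ℝ) ≤ (max (4*x - 3) 0) ^ (n-1) := pow_nonneg (le_max_right _ _) _
  have hnn : (0:ℝ) ≤ (1-x) * (n:ℝ) :=
    mul_nonneg (by linarith) (Nat.cast_nonneg n)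
  have step1 : (1 - x) * (n:ℝ) * ((max (2*x - 1) 0) ^ (n-1) - (max (4*x - 3) 0) ^ (n-1))
      ≤ (1 - x) * (n:ℝ) * (max (2*x - 1) 0) ^ (n-1) := by
    apply mul_le_mul_of_nonneg_left _ hnn
    linarith
  refine step1.trans ?_
  rcases le_or_gt x (1/2) with hc | hc
  · have : max (2*x-1) 0 = 0 := max_eq_right (by linarith)
    rw [this, zero_pow (by omega : n - 1 ≠ 0)]
    norm_num
  · have ha : max (2*x-1) 0 = 2*x-1 := max_eq_left (by linarith)
    rw [ha]
    have hk := key' n hn (2*x-1) (by linarith) (by linarith)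
    nlinarith [pow_nonneg (by linarith : (0:ℝ) ≤ 2*x-1) (n-1)]
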